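/- arXiv:2408.02295 — 3 statements merged into one kernel-verified Lean document; each statement's English description precedes it below -/
import Mathlib

section
/- For every shape parameter β with 0 < β ≤ 2, the function f : ℝ → ℝ given by f(x) = exp(−|x|^β) is positive definite; that is, for every n ∈ ℕ, every tuple of points x : Fin n → ℝ, and every tuple of complex coefficients c : Fin n → ℂ, the sum ∑_{i,j} c i * conj (c j) * f (x i − x j) has nonnegative real part. -/
open scoped Real
open Complex MeasureTheory Filter Topology Set

set_option maxHeartbeats 1000000

noncomputable section GGDPosDef

/-- Positive definiteness of a real kernel `f`. -/
def IsPD (f : ℝ → ℝ) : Prop :=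
  ∀ (n : ℕ) (x : Fin n → ℝ) (c : Fin n → ℂ),
    0 ≤ (∑ i : Fin n, ∑ j : Fin n,
      c i * (starRingEnd ℂ) (c j) * (f (x i - x j) : ℂ)).re

lemma isPD_const {a : ℝ} (ha : 0 ≤ a) : IsPD (fun _ => a) := by
  intro n x c
  have : (∑ i : Fin n, ∑ j : Fin n, c i * (starRingEnd ℂ) (c j) * ((a : ℝ) : ℂ))
      = (a : ℂ) * ((∑ i, c i) * (starRingEnd ℂ) (∑ j, c j)) := by
    rw [map_sum, Finset.sum_mul_sum]
    rw [Finset.mul_sum]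
    refine Finset.sum_congr rfl fun i _ => ?_
    rw [Finset.mul_sum]
    exact Finset.sum_congr rfl fun j _ => by ring
  rw [this, Complex.mul_conj']
  rw [← Complex.ofReal_pow, ← Complex.ofReal_mul, Complex.ofReal_re]
  positivity

lemma IsPD.add {f g : ℝ → ℝ} (hf : IsPD f) (hg : IsPD g) : IsPD (fun u => f u + g u) := by
  intro n x c
  have : (∑ i : Fin n, ∑ j : Fin n,
      c i * (starRingEnd ℂ) (c j) * ((f (x i - x j) + g (x i - x j) : ℝ) : ℂ))
      = (∑ i : Fin n, ∑ j : Fin n, c i * (starRingEnd ℂ) (c j) * (f (x i - x j) : ℂ))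
      + (∑ i : Fin n, ∑ j : Fin n, c i * (starRingEnd ℂ) (c j) * (g (x i - x j) : ℂ)) := by
    rw [← Finset.sum_add_distrib]
    refine Finset.sum_congr rfl fun i _ => ?_
    rw [← Finset.sum_add_distrib]
    refine Finset.sum_congr rfl fun j _ => ?_
    push_cast; ring
  rw [this, Complex.add_re]
  exact add_nonneg (hf n x c) (hg n x c)

lemma IsPD.smul {f : ℝ → ℝ} {a : ℝ} (ha : 0 ≤ a) (hf : IsPD f) : IsPD (fun u => a * f u) := by
  intro n x c
  have : (∑ i : Fin n, ∑ j : Fin n,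
      c i * (starRingEnd ℂ) (c j) * ((a * f (x i - x j) : ℝ) : ℂ))
      = (a : ℂ) * ∑ i : Fin n, ∑ j : Fin n, c i * (starRingEnd ℂ) (c j) * (f (x i - x j) : ℂ) := by
    rw [Finset.mul_sum]
    refine Finset.sum_congr rfl fun i _ => ?_
    rw [Finset.mul_sum]
    refine Finset.sum_congr rfl fun j _ => ?_
    push_cast; ring
  rw [this, Complex.mul_re]
  simp only [Complex.ofReal_re, Complex.ofReal_im, zero_mul, sub_zero]
  exact mul_nonneg ha (hf n x c)

/-- A pointwise limit of positive definite functions is positive definite. -/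
lemma isPD_of_tendsto {f : ℝ → ℝ} {F : ℕ → ℝ → ℝ} (hF : ∀ k, IsPD (F k))
    (hlim : ∀ u, Tendsto (fun k => F k u) atTop (𝓝 (f u))) : IsPD f := by
  intro n x c
  have : Tendsto (fun k => (∑ i : Fin n, ∑ j : Fin n,
      c i * (starRingEnd ℂ) (c j) * (F k (x i - x j) : ℂ)))
      atTop (𝓝 (∑ i : Fin n, ∑ j : Fin n,
      c i * (starRingEnd ℂ) (c j) * (f (x i - x j) : ℂ))) := by
    refine tendsto_finset_sum _ fun i _ => tendsto_finset_sum _ fun j _ => ?_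
    exact tendsto_const_nhds.mul ((Complex.continuous_ofReal.tendsto _).comp (hlim _))
  exact ge_of_tendsto' ((Complex.continuous_re.tendsto _).comp this) (fun k => hF k n x c)

/-- Multiplying a positive definite function by `cos (t * ·)` preserves positive
definiteness. -/
lemma IsPD.mul_cos {f : ℝ → ℝ} (hf : IsPD f) (t : ℝ) :
    IsPD (fun u => f u * Real.cos (t * u)) := by
  intro n x c
  set c₁ : Fin n → ℂ := fun i => c i * Complex.exp (Complex.I * (t * x i)) with hc₁
  set c₂ : Fin n → ℂ := fun i => c i * Complex.exp (-(Complex.I * (t * x i))) with hc₂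
  have key : ∀ i j, c i * (starRingEnd ℂ) (c j) * ((f (x i - x j) * Real.cos (t * (x i - x j)) : ℝ) : ℂ)
      = (1/2 : ℂ) * (c₁ i * (starRingEnd ℂ) (c₁ j) * (f (x i - x j) : ℂ))
      + (1/2 : ℂ) * (c₂ i * (starRingEnd ℂ) (c₂ j) * (f (x i - x j) : ℂ)) := by
    intro i j
    simp only [hc₁, hc₂, map_mul, ← Complex.exp_conj, map_neg, map_mul, Complex.conj_I,
      Complex.conj_ofReal]
    have h1 : ((Real.cos (t * (x i - x j)) : ℝ) : ℂ) = Complex.cos ((t : ℂ) * ((x i : ℂ) - x j)) := by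
      rw [← Complex.ofReal_sub, ← Complex.ofReal_mul, Complex.ofReal_cos]
    rw [Complex.ofReal_mul, h1, Complex.cos]
    have hA : Complex.exp ((t : ℂ) * ((x i : ℂ) - x j) * Complex.I)
        = Complex.exp (Complex.I * (t * x i)) / Complex.exp (Complex.I * (t * x j)) := by
      rw [← Complex.exp_sub]; ring_nf
    have hB : Complex.exp (-((t : ℂ) * ((x i : ℂ) - x j)) * Complex.I)
        = Complex.exp (Complex.I * (t * x j)) / Complex.exp (Complex.I * (t * x i)) := by
      rw [← Complex.exp_sub]; ring_nf
    have hC : Complex.exp (-(Complex.I * ((t : ℂ) * x i)))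
        = (Complex.exp (Complex.I * (t * x i)))⁻¹ := by
      rw [← Complex.exp_neg]
    have hD : Complex.exp (-(Complex.I * ((t : ℂ) * x j)))
        = (Complex.exp (Complex.I * (t * x j)))⁻¹ := by
      rw [← Complex.exp_neg]
    have hE : Complex.exp (-Complex.I * ((t : ℂ) * x j))
        = (Complex.exp (Complex.I * (t * x j)))⁻¹ := by
      rw [← Complex.exp_neg]; ring_nf
    have hF2 : Complex.exp (-Complex.I * ((t : ℂ) * x i))
        = (Complex.exp (Complex.I * (t * x i)))⁻¹ := by
      rw [← Complex.exp_neg]; ring_nf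
    have n1 := Complex.exp_ne_zero (Complex.I * ((t : ℂ) * x i))
    have n2 := Complex.exp_ne_zero (Complex.I * ((t : ℂ) * x j))
    have hG : Complex.exp (-(-Complex.I * ((t : ℂ) * x j)))
        = Complex.exp (Complex.I * (t * x j)) := by ring_nf
    rw [hA, hB, hG, hC, hE]
    field_simp
  calc (0:ℝ) ≤ ((1/2 : ℂ) * (∑ i : Fin n, ∑ j : Fin n, c₁ i * (starRingEnd ℂ) (c₁ j) * (f (x i - x j) : ℂ))
      + (1/2 : ℂ) * (∑ i : Fin n, ∑ j : Fin n, c₂ i * (starRingEnd ℂ) (c₂ j) * (f (x i - x j) : ℂ))).re := by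
        rw [Complex.add_re]
        have e1 : ((1/2 : ℂ) * (∑ i : Fin n, ∑ j : Fin n, c₁ i * (starRingEnd ℂ) (c₁ j) * (f (x i - x j) : ℂ))).re
            = (1/2 : ℝ) * (∑ i : Fin n, ∑ j : Fin n, c₁ i * (starRingEnd ℂ) (c₁ j) * (f (x i - x j) : ℂ)).re := by
          rw [show (1/2 : ℂ) = ((1/2 : ℝ) : ℂ) by norm_num, Complex.re_ofReal_mul]
        have e2 : ((1/2 : ℂ) * (∑ i : Fin n, ∑ j : Fin n, c₂ i * (starRingEnd ℂ) (c₂ j) * (f (x i - x j) : ℂ))).re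
            = (1/2 : ℝ) * (∑ i : Fin n, ∑ j : Fin n, c₂ i * (starRingEnd ℂ) (c₂ j) * (f (x i - x j) : ℂ)).re := by
          rw [show (1/2 : ℂ) = ((1/2 : ℝ) : ℂ) by norm_num, Complex.re_ofReal_mul]
        rw [e1, e2]
        have := hf n x c₁
        have := hf n x c₂
        positivity
    _ = (∑ i : Fin n, ∑ j : Fin n,
        c i * (starRingEnd ℂ) (c j) * ((f (x i - x j) * Real.cos (t * (x i - x j)) : ℝ) : ℂ)).re := by
        congr 1
        rw [Finset.mul_sum, Finset.mul_sum, ← Finset.sum_add_distrib]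
        refine (Finset.sum_congr rfl fun i _ => ?_).symm
        rw [Finset.mul_sum, Finset.mul_sum, ← Finset.sum_add_distrib]
        exact Finset.sum_congr rfl fun j _ => key i j

lemma IsPD.congr {f g : ℝ → ℝ} (hf : IsPD f) (h : ∀ u, f u = g u) : IsPD g := by
  have : f = g := funext h
  rwa [this] at hf

/-- If multiplication by `q` preserves positive definiteness, then `exp ∘ q` is
positive definite. -/
lemma isPD_exp_of_mul (q : ℝ → ℝ) (hmul : ∀ f, IsPD f → IsPD (fun u => f u * q u)) :
    IsPD (fun u => Real.exp (q u)) := by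
  have hpow : ∀ m : ℕ, IsPD (fun u => q u ^ m) := by
    intro m
    induction m with
    | zero => exact (isPD_const zero_le_one).congr (by simp)
    | succ m ih => exact (hmul _ ih).congr (fun u => (pow_succ (q u) m).symm)
  have hsum : ∀ N : ℕ, IsPD (fun u => ∑ m ∈ Finset.range N, q u ^ m / m.factorial) := by
    intro N
    induction N with
    | zero => exact (isPD_const le_rfl).congr (by simp)
    | succ N ih =>
      have h1 : IsPD (fun u => q u ^ N / N.factorial) :=
        ((hpow N).smul (a := (N.factorial : ℝ)⁻¹) (by positivity)).congr
          (fun u => inv_mul_eq_div _ _)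
      exact (ih.add h1).congr (fun u => (Finset.sum_range_succ _ N).symm)
  refine isPD_of_tendsto hsum (fun u => ?_)
  have := (NormedSpace.expSeries_div_hasSum_exp (q u)).tendsto_sum_nat
  rwa [← Real.exp_eq_exp_ℝ] at this

lemma integrable_mul_cos {w : ℝ → ℝ} (hw : Integrable w) (d : ℝ) :
    Integrable (fun s => w s * Real.cos (s * d)) := by
  have h : Integrable (fun s => Real.cos (s * d) * w s) :=
    hw.bdd_mul (c := 1) ((Real.continuous_cos.comp (continuous_id.mul continuous_const)).aestronglyMeasurable)
      (Filter.Eventually.of_forall fun s => by simpa using Real.abs_cos_le_one (s * d))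
  exact h.congr (Filter.Eventually.of_forall fun s => mul_comm _ _)

/-- Multiplying a PD function by `u ↦ ∫ w s * cos (s*u) ds` (with `w ≥ 0` integrable)
preserves positive definiteness. -/
lemma IsPD.mul_intcos {f : ℝ → ℝ} (hf : IsPD f) {w : ℝ → ℝ}
    (hw : Integrable w) (hw0 : ∀ s, 0 ≤ w s) :
    IsPD (fun u => f u * ∫ s, w s * Real.cos (s * u)) := by
  intro n x c
  have step1 : (∑ i : Fin n, ∑ j : Fin n,
      c i * (starRingEnd ℂ) (c j) *
        ((f (x i - x j) * ∫ s, w s * Real.cos (s * (x i - x j)) : ℝ) : ℂ)).re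
      = ∑ i : Fin n, ∑ j : Fin n, ∫ s, w s *
          (c i * (starRingEnd ℂ) (c j) *
            ((f (x i - x j) * Real.cos (s * (x i - x j)) : ℝ) : ℂ)).re := by
    rw [Complex.re_sum]
    refine Finset.sum_congr rfl fun i _ => ?_
    rw [Complex.re_sum]
    refine Finset.sum_congr rfl fun j _ => ?_
    set d := x i - x j
    rw [Complex.re_mul_ofReal, ← integral_const_mul, ← integral_const_mul]
    refine integral_congr_ae (Filter.Eventually.of_forall fun s => ?_)
    dsimp only
    rw [Complex.re_mul_ofReal]; ring
  rw [step1]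
  have step2 : ∀ i j : Fin n, Integrable (fun s => w s *
      (c i * (starRingEnd ℂ) (c j) *
        ((f (x i - x j) * Real.cos (s * (x i - x j)) : ℝ) : ℂ)).re) := by
    intro i j
    set d := x i - x j
    have : ∀ s, w s * (c i * (starRingEnd ℂ) (c j) * ((f d * Real.cos (s * d) : ℝ) : ℂ)).re
        = ((c i * (starRingEnd ℂ) (c j)).re * f d) * (w s * Real.cos (s * d)) := by
      intro s
      rw [Complex.re_mul_ofReal]; ring
    refine ((integrable_mul_cos hw d).const_mul _).congr
      (Filter.Eventually.of_forall fun s => (this s).symm)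
  have step3 : ∑ i : Fin n, ∑ j : Fin n, (∫ s, w s *
      (c i * (starRingEnd ℂ) (c j) *
        ((f (x i - x j) * Real.cos (s * (x i - x j)) : ℝ) : ℂ)).re)
      = ∫ s, ∑ i : Fin n, ∑ j : Fin n, w s *
        (c i * (starRingEnd ℂ) (c j) *
          ((f (x i - x j) * Real.cos (s * (x i - x j)) : ℝ) : ℂ)).re := by
    rw [Finset.sum_congr rfl fun i (_ : i ∈ Finset.univ) =>
      (integral_finset_sum _ (fun j _ => step2 i j)).symm]
    exact (integral_finset_sum _ (fun i _ => integrable_finset_sum _ (fun j _ => step2 i j))).symm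
  rw [step3]
  · refine integral_nonneg fun s => ?_
    have key := (hf.mul_cos s) n x c
    rw [Complex.re_sum] at key
    have : ∑ i : Fin n, ∑ j : Fin n, w s *
        (c i * (starRingEnd ℂ) (c j) *
          ((f (x i - x j) * Real.cos (s * (x i - x j)) : ℝ) : ℂ)).re
        = w s * ∑ i : Fin n, ∑ j : Fin n,
          (c i * (starRingEnd ℂ) (c j) *
            ((f (x i - x j) * Real.cos (s * (x i - x j)) : ℝ) : ℂ)).re := by
      rw [Finset.mul_sum]
      exact Finset.sum_congr rfl fun i _ => (Finset.mul_sum _ _ _).symm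
    rw [this]
    refine mul_nonneg (hw0 s) ?_
    have : ∀ i, (∑ j : Fin n, c i * (starRingEnd ℂ) (c j) *
        ((f (x i - x j) * Real.cos (s * (x i - x j)) : ℝ) : ℂ)).re
        = ∑ j : Fin n, (c i * (starRingEnd ℂ) (c j) *
          ((f (x i - x j) * Real.cos (s * (x i - x j)) : ℝ) : ℂ)).re := fun i => Complex.re_sum _ _
    simp only [← this]
    rw [← Complex.re_sum]
    exact hf.mul_cos s n x c
lemma levy_integrableOn {β : ℝ} (hβ₀ : 0 < β) (hβ₂ : β < 2) (u : ℝ) :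
    IntegrableOn (fun s => (1 - Real.cos (s * u)) * s ^ (-1 - β)) (Set.Ioi (0:ℝ)) := by
  have hcont : ContinuousOn (fun s : ℝ => (1 - Real.cos (s * u)) * s ^ (-1 - β)) (Set.Ioi 0) := by
    refine ContinuousOn.mul ?_ (continuousOn_id.rpow_const fun s hs => Or.inl (ne_of_gt hs))
    exact (continuous_const.sub (Real.continuous_cos.comp
      (continuous_id.mul continuous_const))).continuousOn
  have hnn : ∀ s : ℝ, 0 < s → 0 ≤ (1 - Real.cos (s * u)) * s ^ (-1 - β) := fun s hs =>
    mul_nonneg (by linarith [Real.cos_le_one (s * u)]) (Real.rpow_nonneg hs.le _)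
  have I1 : IntegrableOn (fun s => (1 - Real.cos (s * u)) * s ^ (-1 - β)) (Set.Ioc 0 1) := by
    have hdom : IntegrableOn (fun s : ℝ => u ^ 2 / 2 * s ^ (1 - β)) (Set.Ioc (0:ℝ) 1) := by
      have h : IntegrableOn (fun s : ℝ => s ^ (1 - β)) (Set.Ioc (0:ℝ) 1) := by
        rw [integrableOn_Ioc_iff_integrableOn_Ioo]
        exact (intervalIntegral.integrableOn_Ioo_rpow_iff one_pos).mpr (by linarith)
      exact h.const_mul _
    refine Integrable.mono hdom
      ((hcont.mono Ioc_subset_Ioi_self).aestronglyMeasurable measurableSet_Ioc) ?_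
    refine (ae_restrict_iff' measurableSet_Ioc).mpr (ae_of_all _ fun s hs => ?_)
    have hs0 : (0:ℝ) < s := hs.1
    rw [Real.norm_eq_abs, Real.norm_eq_abs, _root_.abs_of_nonneg (hnn s hs0)]
    have h1 : 1 - Real.cos (s * u) ≤ (s * u) ^ 2 / 2 := by
      have := Real.one_sub_sq_div_two_le_cos (x := s * u)
      linarith
    have h2 : (1 - Real.cos (s * u)) * s ^ (-1 - β) ≤ (s * u) ^ 2 / 2 * s ^ (-1 - β) :=
      mul_le_mul_of_nonneg_right h1 (Real.rpow_nonneg hs0.le _)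
    refine h2.trans ?_
    have h3 : (s * u) ^ 2 / 2 * s ^ (-1 - β) = u ^ 2 / 2 * (s ^ (2:ℝ) * s ^ (-1 - β)) := by
      rw [Real.rpow_two]; ring
    rw [h3, ← Real.rpow_add hs0]
    have : (2:ℝ) + (-1 - β) = 1 - β := by ring
    rw [this]
    exact le_abs_self _
  have I2 : IntegrableOn (fun s => (1 - Real.cos (s * u)) * s ^ (-1 - β)) (Set.Ioi 1) := by
    have hdom : IntegrableOn (fun s : ℝ => (2:ℝ) * s ^ (-1 - β)) (Set.Ioi (1:ℝ)) :=
      ((integrableOn_Ioi_rpow_of_lt (by linarith) one_pos).const_mul 2)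
    refine Integrable.mono hdom
      ((hcont.mono (show Set.Ioi (1:ℝ) ⊆ Set.Ioi 0 from fun s hs => Set.mem_Ioi.mpr (lt_trans one_pos (Set.mem_Ioi.mp hs)))).aestronglyMeasurable measurableSet_Ioi) ?_
    refine (ae_restrict_iff' measurableSet_Ioi).mpr (ae_of_all _ fun s hs => ?_)
    have hs0 : (0:ℝ) < s := lt_trans one_pos hs
    rw [Real.norm_eq_abs, Real.norm_eq_abs, _root_.abs_of_nonneg (hnn s hs0)]
    have h2 : (1 - Real.cos (s * u)) * s ^ (-1 - β) ≤ 2 * s ^ (-1 - β) :=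
      mul_le_mul_of_nonneg_right (by linarith [Real.neg_one_le_cos (s * u)])
        (Real.rpow_nonneg hs0.le _)
    exact h2.trans (le_abs_self _)
  have := I1.union I2
  rwa [Set.Ioc_union_Ioi_eq_Ioi zero_le_one] at this

lemma K_pos {β : ℝ} (hβ₀ : 0 < β) (hβ₂ : β < 2) :
    0 < ∫ s in Set.Ioi (0:ℝ), (1 - Real.cos s) * s ^ (-1 - β) := by
  have hInt : IntegrableOn (fun s : ℝ => (1 - Real.cos s) * s ^ (-1 - β)) (Set.Ioi 0) := by
    have := levy_integrableOn hβ₀ hβ₂ 1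
    simpa using this
  have hsub : Set.Ioc (π/2) π ⊆ Set.Ioi (0:ℝ) := fun s hs =>
    lt_of_lt_of_le (by positivity) hs.1.le
  have hnn : ∀ s ∈ Set.Ioi (0:ℝ), 0 ≤ (1 - Real.cos s) * s ^ (-1 - β) := fun s hs =>
    mul_nonneg (by linarith [Real.cos_le_one s]) (Real.rpow_nonneg (le_of_lt hs) _)
  have key : (π - π/2) * π ^ (-1 - β) ≤ ∫ s in Set.Ioc (π/2) π, (1 - Real.cos s) * s ^ (-1 - β) := by
    have hconst : ∫ _s in Set.Ioc (π/2) π, π ^ (-1 - β) = (π - π/2) * π ^ (-1 - β) := by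
      rw [setIntegral_const, Real.volume_real_Ioc_of_le (by linarith [Real.pi_pos]), smul_eq_mul]
    rw [← hconst]
    refine setIntegral_mono_on (integrableOn_const ?_) (hInt.mono_set hsub)
      measurableSet_Ioc (fun s hs => ?_)
    · rw [Real.volume_Ioc]; exact ENNReal.ofReal_ne_top
    · have hs0 : (0:ℝ) < s := hsub hs
      have hcos : Real.cos s ≤ 0 :=
        Real.cos_nonpos_of_pi_div_two_le_of_le hs.1.le (by linarith [hs.2, Real.pi_pos])
      have hrp : π ^ (-1 - β) ≤ s ^ (-1 - β) :=
        Real.rpow_le_rpow_of_nonpos hs0 hs.2 (by linarith)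
      calc π ^ (-1 - β) = 1 * π ^ (-1 - β) := (one_mul _).symm
        _ ≤ (1 - Real.cos s) * s ^ (-1 - β) :=
          mul_le_mul (by linarith) hrp (Real.rpow_nonneg Real.pi_pos.le _) (by linarith)
  have mono : ∫ s in Set.Ioc (π/2) π, (1 - Real.cos s) * s ^ (-1 - β)
      ≤ ∫ s in Set.Ioi (0:ℝ), (1 - Real.cos s) * s ^ (-1 - β) := by
    refine setIntegral_mono_set hInt ?_ (HasSubset.Subset.eventuallyLE hsub)
    exact (ae_restrict_iff' measurableSet_Ioi).mpr (ae_of_all _ hnn)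
  have hπ : 0 < (π - π/2) * π ^ (-1 - β) := by
    have := Real.pi_pos
    have : (0:ℝ) < π ^ (-1 - β) := Real.rpow_pos_of_pos Real.pi_pos _
    nlinarith [Real.pi_pos]
  linarith

lemma levy_eq_pos {β : ℝ} (hβ₀ : 0 < β) (hβ₂ : β < 2) {u : ℝ} (hu : 0 < u) :
    ∫ s in Set.Ioi (0:ℝ), (1 - Real.cos (s * u)) * s ^ (-1 - β)
      = u ^ β * ∫ s in Set.Ioi (0:ℝ), (1 - Real.cos s) * s ^ (-1 - β) := by
  have sub := integral_comp_mul_left_Ioi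
    (fun y : ℝ => (1 - Real.cos y) * y ^ (-1 - β)) 0 hu
  rw [mul_zero] at sub
  have congr1 : ∫ s in Set.Ioi (0:ℝ), (1 - Real.cos (s * u)) * s ^ (-1 - β)
      = ∫ s in Set.Ioi (0:ℝ), u ^ ((1:ℝ) + β) *
        ((1 - Real.cos (u * s)) * (u * s) ^ (-1 - β)) := by
    refine setIntegral_congr_fun measurableSet_Ioi fun s hs => ?_
    have hs0 : (0:ℝ) < s := hs
    rw [Real.mul_rpow hu.le hs0.le, mul_comm s u]
    rw [show u ^ ((1:ℝ) + β) * ((1 - Real.cos (u * s)) * (u ^ (-1 - β) * s ^ (-1 - β)))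
      = (u ^ ((1:ℝ) + β) * u ^ (-1 - β)) * ((1 - Real.cos (u * s)) * s ^ (-1 - β)) by ring,
      ← Real.rpow_add hu, show (1:ℝ) + β + (-1 - β) = 0 by ring, Real.rpow_zero, one_mul]
  rw [congr1, integral_const_mul, sub, smul_eq_mul, ← mul_assoc]
  congr 1
  rw [← Real.rpow_neg_one u, ← Real.rpow_add hu]
  congr 1
  ring

lemma levy_eq {β : ℝ} (hβ₀ : 0 < β) (hβ₂ : β < 2) (u : ℝ) :
    ∫ s in Set.Ioi (0:ℝ), (1 - Real.cos (s * u)) * s ^ (-1 - β)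
      = |u| ^ β * ∫ s in Set.Ioi (0:ℝ), (1 - Real.cos s) * s ^ (-1 - β) := by
  rcases lt_trichotomy u 0 with hu | hu | hu
  · have : ∫ s in Set.Ioi (0:ℝ), (1 - Real.cos (s * u)) * s ^ (-1 - β)
        = ∫ s in Set.Ioi (0:ℝ), (1 - Real.cos (s * (-u))) * s ^ (-1 - β) := by
      refine setIntegral_congr_fun measurableSet_Ioi fun s _ => ?_
      rw [mul_neg, Real.cos_neg]
    rw [this, levy_eq_pos hβ₀ hβ₂ (neg_pos.mpr hu), abs_of_neg hu]
  · simp [hu, Real.zero_rpow hβ₀.ne']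
  · rw [levy_eq_pos hβ₀ hβ₂ hu, abs_of_pos hu]
/-- `exp (a * cos (t * ·))` scaled is PD, so `exp(-a(1-cos(t·)))` is PD. -/
lemma isPD_exp_neg_one_sub_cos (a t : ℝ) (ha : 0 ≤ a) :
    IsPD (fun u => Real.exp (-(a * (1 - Real.cos (t * u))))) := by
  have h1 : IsPD (fun u => Real.exp (a * Real.cos (t * u))) := by
    refine isPD_exp_of_mul _ (fun f hf => ?_)
    exact ((hf.mul_cos t).smul ha).congr (fun u => by ring)
  exact ((h1.smul (Real.exp_nonneg (-a))).congr (fun u => by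
    rw [← Real.exp_add]; ring_nf))

lemma tendsto_sq_approx (u : ℝ) :
    Tendsto (fun k : ℕ => (2 * ((k:ℝ)+1)^2) * (1 - Real.cos ((1/((k:ℝ)+1)) * u)))
      atTop (𝓝 (u ^ 2)) := by
  rcases eq_or_ne u 0 with hu | hu
  · simp [hu]
  · have hy : Tendsto (fun k : ℕ => u / (2 * ((k:ℝ)+1))) atTop (𝓝 0) := by
      have h1 : Tendsto (fun k : ℕ => 2 * ((k:ℝ)+1)) atTop atTop :=
        (tendsto_atTop_add_const_right _ 1 tendsto_natCast_atTop_atTop).const_mul_atTop two_pos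
      simpa [div_eq_mul_inv] using tendsto_const_nhds.mul h1.inv_tendsto_atTop
    have hy' : Tendsto (fun k : ℕ => u / (2 * ((k:ℝ)+1))) atTop (𝓝[≠] 0) := by
      refine tendsto_nhdsWithin_of_tendsto_nhds_of_eventually_within _ hy
        (Eventually.of_forall fun k => ?_)
      have : (2 * ((k:ℝ)+1)) ≠ 0 := by positivity
      simp [div_ne_zero hu this]
    have hsin : Tendsto (fun y : ℝ => Real.sin y / y) (𝓝[≠] 0) (𝓝 1) := by
      have := (Real.hasDerivAt_sin 0)
      rw [hasDerivAt_iff_tendsto_slope] at this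
      simp only [Real.cos_zero] at this
      refine this.congr fun y => ?_
      simp [slope_def_field, Real.sin_zero]
    have hmain : Tendsto (fun k : ℕ =>
        u ^ 2 * (Real.sin (u / (2 * ((k:ℝ)+1))) / (u / (2 * ((k:ℝ)+1)))) ^ 2)
        atTop (𝓝 (u ^ 2)) := by
      have := ((hsin.comp hy').pow 2)
      have h2 : Tendsto (fun k : ℕ =>
          (Real.sin (u / (2 * ((k:ℝ)+1))) / (u / (2 * ((k:ℝ)+1)))) ^ 2) atTop (𝓝 1) := by
        simpa using this
      simpa using tendsto_const_nhds.mul h2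
    refine hmain.congr fun k => ?_
    have hk : ((k:ℝ)+1) ≠ 0 := by positivity
    have hone : 1 - Real.cos ((1/((k:ℝ)+1)) * u) = 2 * Real.sin (u / (2 * ((k:ℝ)+1))) ^ 2 := by
      have h := Real.sin_sq_eq_half_sub (u / (2 * ((k:ℝ)+1)))
      have harg : 2 * (u / (2 * ((k:ℝ)+1))) = (1/((k:ℝ)+1)) * u := by field_simp
      rw [harg] at h
      linarith
    rw [hone]
    have hyne : u / (2 * ((k:ℝ)+1)) ≠ 0 := div_ne_zero hu (by positivity)
    field_simp

/-- positive definiteness of the Gaussian `exp (-|u|^2)` (rpow exponent). -/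
lemma isPD_exp_neg_rpow_two : IsPD (fun u => Real.exp (-(|u| ^ (2:ℝ)))) := by
  refine isPD_of_tendsto (F := fun k u =>
    Real.exp (-((2 * ((k:ℝ)+1)^2) * (1 - Real.cos ((1/((k:ℝ)+1)) * u)))))
    (fun k => isPD_exp_neg_one_sub_cos _ _ (by positivity)) (fun u => ?_)
  have : Tendsto (fun k : ℕ =>
      -((2 * ((k:ℝ)+1)^2) * (1 - Real.cos ((1/((k:ℝ)+1)) * u)))) atTop (𝓝 (-(u^2))) :=
    (tendsto_sq_approx u).neg
  have h2 := (Real.continuous_exp.tendsto _).comp this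
  have h3 : |u| ^ (2:ℝ) = u ^ 2 := by
    rw [show ((2:ℝ)) = ((2:ℕ):ℝ) by norm_num, Real.rpow_natCast, _root_.sq_abs]
  rw [h3]
  exact h2

/-- positive definiteness of `exp (-|u|^β)` for `0 < β < 2`. -/
lemma isPD_exp_neg_rpow_lt_two {β : ℝ} (hβ₀ : 0 < β) (hβ₂ : β < 2) :
    IsPD (fun u => Real.exp (-(|u| ^ β))) := by
  obtain ⟨K, hK⟩ : ∃ K : ℝ, ∫ s in Set.Ioi (0:ℝ), (1 - Real.cos s) * s ^ (-1 - β) = K := ⟨_, rfl⟩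
  have hKpos : 0 < K := hK ▸ K_pos hβ₀ hβ₂
  set S : ℕ → Set ℝ := fun m => Set.Ioc (1/((m:ℝ)+1)) ((m:ℝ)+1) with hS
  set w : ℕ → ℝ → ℝ := fun m => (S m).indicator (fun s => K⁻¹ * s ^ (-1 - β)) with hw
  have hS0 : ∀ m, S m ⊆ Set.Ioi (0:ℝ) := fun m s hs =>
    lt_trans (by positivity) hs.1
  have hwint : ∀ m, Integrable (w m) := by
    intro m
    rw [hw]
    refine (integrable_indicator_iff measurableSet_Ioc).mpr ?_
    have hcont : ContinuousOn (fun s : ℝ => K⁻¹ * s ^ (-1 - β))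
        (Set.Icc (1/((m:ℝ)+1)) ((m:ℝ)+1)) := by
      refine continuousOn_const.mul (continuousOn_id.rpow_const fun s hs => Or.inl ?_)
      have : (0:ℝ) < 1/((m:ℝ)+1) := by positivity
      exact ne_of_gt (lt_of_lt_of_le this hs.1)
    exact (hcont.integrableOn_compact isCompact_Icc).mono_set Set.Ioc_subset_Icc_self
  have hw0 : ∀ m s, 0 ≤ w m s := by
    intro m s
    refine Set.indicator_nonneg (fun s hs => ?_) s
    have hs0 : (0:ℝ) < s := hS0 m hs
    positivity
  -- each truncated kernel is PD
  have hPD : ∀ m, IsPD (fun u =>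
      Real.exp (-(∫ s, w m s)) * Real.exp (∫ s, w m s * Real.cos (s * u))) := by
    intro m
    refine IsPD.smul (Real.exp_nonneg _) ?_
    exact isPD_exp_of_mul _ (fun f hf => hf.mul_intcos (hwint m) (hw0 m))
  -- convergence of the exponents
  have hconv : ∀ u, Tendsto (fun m => ∫ s, w m s * (1 - Real.cos (s * u)))
      atTop (𝓝 (|u| ^ β)) := by
    intro u
    have hrepr : ∀ m, ∫ s, w m s * (1 - Real.cos (s * u))
        = K⁻¹ * ∫ s in S m, (1 - Real.cos (s * u)) * s ^ (-1 - β) := by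
      intro m
      have h1 : (fun s => w m s * (1 - Real.cos (s * u)))
          = (S m).indicator (fun s => K⁻¹ * ((1 - Real.cos (s * u)) * s ^ (-1 - β))) := by
        funext s
        rw [hw]
        by_cases hs : s ∈ S m
        · simp [Set.indicator_of_mem hs]; ring
        · simp [Set.indicator_of_notMem hs]
      rw [h1, integral_indicator measurableSet_Ioc, integral_const_mul]
    have hmono : Monotone S := by
      intro a b hab
      refine Set.Ioc_subset_Ioc ?_ (by exact_mod_cast add_le_add_left (Nat.cast_le.mpr hab) 1)
      refine one_div_le_one_div_of_le (by positivity) ?_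
      exact_mod_cast add_le_add_left (Nat.cast_le.mpr hab) 1
    have hunion : (⋃ m, S m) = Set.Ioi (0:ℝ) := by
      ext s
      simp only [Set.mem_iUnion, Set.mem_Ioc, Set.mem_Ioi]
      constructor
      · rintro ⟨m, hm1, _⟩; exact lt_trans (by positivity) hm1
      · intro hs
        obtain ⟨m, hm⟩ := exists_nat_gt (max s (1/s))
        refine ⟨m, ?_, ?_⟩
        · have h1 : 1/s < (m:ℝ)+1 := lt_trans (lt_of_le_of_lt (le_max_right _ _) hm)
            (by linarith)
          exact (one_div_lt (by positivity) hs).mpr h1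
        · have := lt_of_le_of_lt (le_max_left s (1/s)) hm
          linarith
    have hsetconv : Tendsto (fun m => ∫ s in S m, (1 - Real.cos (s * u)) * s ^ (-1 - β))
        atTop (𝓝 (|u| ^ β * K)) := by
      have hint : IntegrableOn (fun s => (1 - Real.cos (s * u)) * s ^ (-1 - β)) (⋃ m, S m) :=
        hunion ▸ levy_integrableOn hβ₀ hβ₂ u
      have h0 := tendsto_setIntegral_of_monotone (fun m => measurableSet_Ioc) hmono hint
      rwa [hunion, levy_eq hβ₀ hβ₂ u, hK] at h0
    have h1 := (tendsto_const_nhds (x := K⁻¹)).mul hsetconv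
    rw [mul_comm (|u| ^ β), ← mul_assoc, inv_mul_cancel₀ (ne_of_gt hKpos), one_mul] at h1
    refine Tendsto.congr (fun m => (hrepr m).symm) h1
  refine isPD_of_tendsto hPD (fun u => ?_)
  have heq : ∀ m, Real.exp (-(∫ s, w m s)) * Real.exp (∫ s, w m s * Real.cos (s * u))
      = Real.exp (-(∫ s, w m s * (1 - Real.cos (s * u)))) := by
    intro m
    rw [← Real.exp_add]
    congr 1
    have hsub : ∫ s, w m s * (1 - Real.cos (s * u))
        = (∫ s, w m s) - ∫ s, w m s * Real.cos (s * u) := by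
      rw [← integral_sub (hwint m) (integrable_mul_cos (hwint m) u)]
      refine integral_congr_ae (Eventually.of_forall fun s => ?_)
      ring
    rw [hsub]
    ring
  have := (Real.continuous_exp.tendsto _).comp (hconv u).neg
  refine Tendsto.congr (fun m => (heq m).symm) this

/-- **Positive-definiteness of the generalized Gaussian kernel.**
For every shape parameter `β` with `0 < β ≤ 2`, the function
`f x = exp (-|x| ^ β)` is positive definite: for every `n`, every tuple of
points `x : Fin n → ℝ` and complex coefficients `c : Fin n → ℂ`, the sum
`∑ i j, c i * conj (c j) * f (x i - x j)` has nonnegative real part. -/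
theorem ggd_kernel_posdef (β : ℝ) (hβ₀ : 0 < β) (hβ₂ : β ≤ 2) :
    ∀ (n : ℕ) (x : Fin n → ℝ) (c : Fin n → ℂ),
      0 ≤ (∑ i : Fin n, ∑ j : Fin n,
        c i * (starRingEnd ℂ) (c j) *
          (Real.exp (-(|x i - x j| ^ β)) : ℂ)).re := by
  rcases eq_or_lt_of_le hβ₂ with h2 | hlt
  · subst h2
    exact fun n x c => isPD_exp_neg_rpow_two n x c
  · exact fun n x c => isPD_exp_neg_rpow_lt_two hβ₀ hlt n x c

end GGDPosDef
end

section
/- For every β with 0 < β < 2, the strict inequality Γ(5/β) · Γ(1/β) > 3 · Γ(3/β)² holds (equivalently, the generalized Gaussian distribution with shape parameter β < 2 is leptokurtic, i.e., has positive excess kurtosis), with equality when β = 2. -/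
open Filter Finset Real

/-- The Gaussian case: `Γ(5/2) Γ(1/2) = 3 Γ(3/2)²`. -/
private lemma gamma_half_eq : Real.Gamma (5 / 2) * Real.Gamma (1 / 2) = 3 * Real.Gamma (3 / 2) ^ 2 := by
  have h12 : Real.Gamma (1 / 2) = Real.sqrt π := Real.Gamma_one_half_eq
  have h32 : Real.Gamma (3 / 2) = (1 / 2) * Real.Gamma (1 / 2) := by
    have := Real.Gamma_add_one (s := 1 / 2) (by norm_num)
    rw [show (1:ℝ)/2 + 1 = 3/2 by norm_num] at this
    rw [this]
  have h52 : Real.Gamma (5 / 2) = (3 / 2) * Real.Gamma (3 / 2) := by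
    have := Real.Gamma_add_one (s := 3 / 2) (by norm_num)
    rw [show (3:ℝ)/2 + 1 = 5/2 by norm_num] at this
    rw [this]
  have hpi : Real.sqrt π * Real.sqrt π = π :=
    Real.mul_self_sqrt Real.pi_pos.le
  rw [h52, h32, h12]
  ring

/-- Key inequality: for `a > 1/2`, `Γ(5a) Γ(a) > 3 Γ(3a)²`. -/
private lemma key (a : ℝ) (ha : 1 / 2 < a) :
    3 * Real.Gamma (3 * a) ^ 2 < Real.Gamma (5 * a) * Real.Gamma a := by
  have ha0 : 0 < a := lt_trans (by norm_num) ha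
  -- the two per-index factors
  set α : ℕ → ℝ := fun j => (5/2 + (j:ℝ)) * ((1/2 + (j:ℝ)) * ((3*a + (j:ℝ)) * (3*a + (j:ℝ)))) with hα
  set β : ℕ → ℝ := fun j => (5*a + (j:ℝ)) * ((a + (j:ℝ)) * ((3/2 + (j:ℝ)) * (3/2 + (j:ℝ)))) with hβ
  have hβpos : ∀ j : ℕ, 0 < β j := by
    intro j
    have hj : (0:ℝ) ≤ (j:ℝ) := Nat.cast_nonneg j
    have h1 : 0 < 5*a + (j:ℝ) := by linarith
    have h2 : 0 < a + (j:ℝ) := by linarith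
    have h3 : 0 < 3/2 + (j:ℝ) := by linarith
    simp only [hβ]
    positivity
  have hαpos : ∀ j : ℕ, 0 < α j := by
    intro j
    have hj : (0:ℝ) ≤ (j:ℝ) := Nat.cast_nonneg j
    have h1 : 0 < 5/2 + (j:ℝ) := by linarith
    have h2 : 0 < 1/2 + (j:ℝ) := by linarith
    have h3 : 0 < 3*a + (j:ℝ) := by linarith
    simp only [hα]
    positivity
  have hβα : ∀ j : ℕ, β j ≤ α j := by
    intro j
    have hj : (0:ℝ) ≤ (j:ℝ) := Nat.cast_nonneg j
    have hfac : α j - β j = 2*(a - 1/2)*(j:ℝ)*((2*a+1)*(j:ℝ) + 6*a) := by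
      simp only [hα, hβ]; ring
    nlinarith [mul_nonneg (mul_nonneg (by linarith : (0:ℝ) ≤ 2*(a-1/2)) hj)
      (by nlinarith : (0:ℝ) ≤ (2*a+1)*(j:ℝ) + 6*a)]
  have hβα1 : β 1 < α 1 := by
    have hfac : α 1 - β 1 = 2*(a - 1/2)*((2*a+1) + 6*a) := by
      simp only [hα, hβ]; push_cast; ring
    nlinarith
  -- product inequality with one strict factor pulled out
  have hprod : ∀ n : ℕ, 1 ≤ n →
      α 1 * ∏ j ∈ range (n+1), β j ≤ β 1 * ∏ j ∈ range (n+1), α j := by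
    intro n hn
    have h1mem : 1 ∈ range (n+1) := by
      simp [Finset.mem_range]; omega
    rw [← Finset.mul_prod_erase _ β h1mem, ← Finset.mul_prod_erase _ α h1mem]
    have hle : ∏ j ∈ (range (n+1)).erase 1, β j ≤ ∏ j ∈ (range (n+1)).erase 1, α j :=
      Finset.prod_le_prod (fun j _ => (hβpos j).le) (fun j _ => hβα j)
    have hβ1pos := hβpos 1
    have hα1pos := hαpos 1
    have hprodβpos : 0 < ∏ j ∈ (range (n+1)).erase 1, β j :=
      Finset.prod_pos (fun j _ => hβpos j)
    nlinarith [mul_le_mul_of_nonneg_left hle (le_of_lt (mul_pos hα1pos hβ1pos))]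
  -- express the GammaSeq products
  have hprodpos : ∀ (f : ℕ → ℝ), (∀ j : ℕ, 0 < f j) → ∀ n : ℕ,
      (0:ℝ) < ∏ j ∈ range (n+1), f j := fun f hf n => Finset.prod_pos (fun j _ => hf j)
  have hseq : ∀ n : ℕ, 1 ≤ n →
      α 1 * (Real.GammaSeq (5/2) n * Real.GammaSeq (1/2) n *
        (Real.GammaSeq (3*a) n * Real.GammaSeq (3*a) n)) ≤
      β 1 * (Real.GammaSeq (5*a) n * Real.GammaSeq a n *
        (Real.GammaSeq (3/2) n * Real.GammaSeq (3/2) n)) := by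
    intro n hn
    have hn0 : (0:ℝ) < (n:ℝ) := by exact_mod_cast Nat.pos_of_ne_zero (by omega)
    -- numerator equality
    have hnum1 : (n:ℝ)^((5:ℝ)/2) * (n:ℝ)^((1:ℝ)/2) * ((n:ℝ)^(3*a) * (n:ℝ)^(3*a))
        = (n:ℝ)^(6*a+3) := by
      rw [← Real.rpow_add hn0, ← Real.rpow_add hn0, ← Real.rpow_add hn0]
      norm_num; ring_nf
    have hnum2 : (n:ℝ)^(5*a) * (n:ℝ)^a * ((n:ℝ)^((3:ℝ)/2) * (n:ℝ)^((3:ℝ)/2))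
        = (n:ℝ)^(6*a+3) := by
      rw [← Real.rpow_add hn0, ← Real.rpow_add hn0, ← Real.rpow_add hn0]
      norm_num; ring_nf
    -- denominators
    have hP1 : (0:ℝ) < ∏ j ∈ range (n+1), ((5:ℝ)/2 + (j:ℝ)) :=
      hprodpos _ (fun j => by positivity) n
    have hP2 : (0:ℝ) < ∏ j ∈ range (n+1), ((1:ℝ)/2 + (j:ℝ)) :=
      hprodpos _ (fun j => by positivity) n
    have hP3 : (0:ℝ) < ∏ j ∈ range (n+1), (3*a + (j:ℝ)) :=
      hprodpos _ (fun j => by positivity) n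
    have hP4 : (0:ℝ) < ∏ j ∈ range (n+1), (5*a + (j:ℝ)) :=
      hprodpos _ (fun j => by positivity) n
    have hP5 : (0:ℝ) < ∏ j ∈ range (n+1), (a + (j:ℝ)) :=
      hprodpos _ (fun j => by positivity) n
    have hP6 : (0:ℝ) < ∏ j ∈ range (n+1), ((3:ℝ)/2 + (j:ℝ)) :=
      hprodpos _ (fun j => by positivity) n
    have hT : Real.GammaSeq (5/2) n * Real.GammaSeq (1/2) n *
        (Real.GammaSeq (3*a) n * Real.GammaSeq (3*a) n)
        = ((n:ℝ)^(6*a+3) * (Nat.factorial n : ℝ)^4) / ∏ j ∈ range (n+1), α j := by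
      simp only [Real.GammaSeq, hα]
      rw [Finset.prod_mul_distrib, Finset.prod_mul_distrib, Finset.prod_mul_distrib]
      rw [← hnum1]
      field_simp
    have hS : Real.GammaSeq (5*a) n * Real.GammaSeq a n *
        (Real.GammaSeq (3/2) n * Real.GammaSeq (3/2) n)
        = ((n:ℝ)^(6*a+3) * (Nat.factorial n : ℝ)^4) / ∏ j ∈ range (n+1), β j := by
      simp only [Real.GammaSeq, hβ]
      rw [Finset.prod_mul_distrib, Finset.prod_mul_distrib, Finset.prod_mul_distrib]
      rw [← hnum2]
      field_simp
    rw [hS, hT]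
    have hA : (0:ℝ) < ∏ j ∈ range (n+1), α j := hprodpos _ hαpos n
    have hB : (0:ℝ) < ∏ j ∈ range (n+1), β j := hprodpos _ hβpos n
    have hC : (0:ℝ) ≤ (n:ℝ)^(6*a+3) * (Nat.factorial n : ℝ)^4 := by positivity
    rw [← mul_div_assoc, ← mul_div_assoc, div_le_div_iff₀ hA hB]
    calc α 1 * ((n:ℝ)^(6*a+3) * (Nat.factorial n : ℝ)^4) * ∏ j ∈ range (n+1), β j
        = ((n:ℝ)^(6*a+3) * (Nat.factorial n : ℝ)^4) * (α 1 * ∏ j ∈ range (n+1), β j) := by ring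
      _ ≤ ((n:ℝ)^(6*a+3) * (Nat.factorial n : ℝ)^4) * (β 1 * ∏ j ∈ range (n+1), α j) :=
          mul_le_mul_of_nonneg_left (hprod n hn) hC
      _ = β 1 * ((n:ℝ)^(6*a+3) * (Nat.factorial n : ℝ)^4) * ∏ j ∈ range (n+1), α j := by ring
  -- take limits
  have hTlim : Tendsto (fun n => α 1 * (Real.GammaSeq (5/2) n * Real.GammaSeq (1/2) n *
      (Real.GammaSeq (3*a) n * Real.GammaSeq (3*a) n))) atTop
      (nhds (α 1 * (Real.Gamma (5/2) * Real.Gamma (1/2) * (Real.Gamma (3*a) * Real.Gamma (3*a))))) :=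
    (((Real.GammaSeq_tendsto_Gamma (5/2)).mul (Real.GammaSeq_tendsto_Gamma (1/2))).mul
      ((Real.GammaSeq_tendsto_Gamma (3*a)).mul (Real.GammaSeq_tendsto_Gamma (3*a)))).const_mul _
  have hSlim : Tendsto (fun n => β 1 * (Real.GammaSeq (5*a) n * Real.GammaSeq a n *
      (Real.GammaSeq (3/2) n * Real.GammaSeq (3/2) n))) atTop
      (nhds (β 1 * (Real.Gamma (5*a) * Real.Gamma a * (Real.Gamma (3/2) * Real.Gamma (3/2))))) :=
    (((Real.GammaSeq_tendsto_Gamma (5*a)).mul (Real.GammaSeq_tendsto_Gamma a)).mul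
      ((Real.GammaSeq_tendsto_Gamma (3/2)).mul (Real.GammaSeq_tendsto_Gamma (3/2)))).const_mul _
  have hlim : α 1 * (Real.Gamma (5/2) * Real.Gamma (1/2) * (Real.Gamma (3*a) * Real.Gamma (3*a))) ≤
      β 1 * (Real.Gamma (5*a) * Real.Gamma a * (Real.Gamma (3/2) * Real.Gamma (3/2))) := by
    refine le_of_tendsto_of_tendsto hTlim hSlim ?_
    filter_upwards [eventually_ge_atTop 1] with n hn using hseq n hn
  -- conclude
  rw [gamma_half_eq] at hlim
  have hG32 : 0 < Real.Gamma (3/2) := Real.Gamma_pos_of_pos (by norm_num)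
  have hG3a : 0 < Real.Gamma (3*a) := Real.Gamma_pos_of_pos (by linarith)
  have hβ1 : 0 < β 1 := hβpos 1
  have hpos32 : (0:ℝ) < Real.Gamma (3/2)^2 := by positivity
  have hstep : β 1 * (3 * Real.Gamma (3*a)^2) < β 1 * (Real.Gamma (5*a) * Real.Gamma a) := by
    have h2 : β 1 * (3 * Real.Gamma (3*a)^2) * Real.Gamma (3/2)^2 <
        β 1 * (Real.Gamma (5*a) * Real.Gamma a) * Real.Gamma (3/2)^2 := by
      calc β 1 * (3 * Real.Gamma (3*a)^2) * Real.Gamma (3/2)^2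
          < α 1 * (3 * Real.Gamma (3*a)^2) * Real.Gamma (3/2)^2 := by
            apply mul_lt_mul_of_pos_right (mul_lt_mul_of_pos_right hβα1 (by positivity)) hpos32
        _ = α 1 * (3 * Real.Gamma (3/2)^2 * (Real.Gamma (3*a) * Real.Gamma (3*a))) := by ring
        _ ≤ β 1 * (Real.Gamma (5*a) * Real.Gamma a * (Real.Gamma (3/2) * Real.Gamma (3/2))) := hlim
        _ = β 1 * (Real.Gamma (5*a) * Real.Gamma a) * Real.Gamma (3/2)^2 := by ring
    exact lt_of_mul_lt_mul_right h2 hpos32.le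
  exact lt_of_mul_lt_mul_left hstep hβ1.le

/-- **Leptokurtosis of the generalized Gaussian for `β < 2`.**
For every `β` with `0 < β < 2`, `Γ(5/β) Γ(1/β) > 3 Γ(3/β)²` (i.e. the
generalized Gaussian distribution with shape parameter `β < 2` has positive
excess kurtosis), with equality when `β = 2`. -/
theorem ggd_leptokurtic_of_beta_lt_two :
    (∀ β : ℝ, 0 < β → β < 2 →
        3 * Real.Gamma (3 / β) ^ 2 < Real.Gamma (5 / β) * Real.Gamma (1 / β)) ∧
      Real.Gamma (5 / 2) * Real.Gamma (1 / 2) = 3 * Real.Gamma (3 / 2) ^ 2 := by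
  constructor
  · intro β hβ0 hβ2
    have ht : 1 / 2 < 1 / β := by
      rw [div_lt_div_iff₀ two_pos hβ0]; linarith
    have h3 : 3 / β = 3 * (1 / β) := by ring
    have h5 : 5 / β = 5 * (1 / β) := by ring
    rw [h3, h5]
    exact key (1 / β) ht
  · exact gamma_half_eq
end

section
/- Let n ≥ 2 and let X₁, …, X_n be i.i.d. real random variables on a probability space with mean μ, variance σ² = E[(X₁−μ)²] > 0, and finite fourth central moment μ₄ = E[(X₁−μ)⁴] < ∞; let κ = μ₄/σ⁴ − 3 be the excess kurtosis, and let s² = (1/(n−1))∑(X_i − X̄)² with X̄ = (1/n)∑X_i. Then among all estimators of the form c · s² with c ∈ ℝ, the mean squared error E[(c·s² − σ²)²] is minimized at c* = (κ/n + (n+1)/(n−1))⁻¹; that is, for every c ∈ ℝ, E[(c*·s² − σ²)²] ≤ E[(c·s² − σ²)²]. -/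
open MeasureTheory ProbabilityTheory

structure MomProp {Ω : Type*} [MeasurableSpace Ω] (P : Measure Ω) {n : ℕ}
    (Y : Fin n → Ω → ℝ) (m2 m3 m4 : ℝ) (s : Finset (Fin n)) : Prop where
  iS : Integrable (fun ω => ∑ i ∈ s, Y i ω) P
  iS2 : Integrable (fun ω => (∑ i ∈ s, Y i ω) ^ 2) P
  iS3 : Integrable (fun ω => (∑ i ∈ s, Y i ω) ^ 3) P
  iS4 : Integrable (fun ω => (∑ i ∈ s, Y i ω) ^ 4) P
  iU : Integrable (fun ω => ∑ i ∈ s, Y i ω ^ 2) P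
  iU2 : Integrable (fun ω => (∑ i ∈ s, Y i ω ^ 2) ^ 2) P
  iUS : Integrable (fun ω => (∑ i ∈ s, Y i ω ^ 2) * (∑ i ∈ s, Y i ω)) P
  iUS2 : Integrable (fun ω => (∑ i ∈ s, Y i ω ^ 2) * (∑ i ∈ s, Y i ω) ^ 2) P
  eS : ∫ ω, ∑ i ∈ s, Y i ω ∂P = 0
  eS2 : ∫ ω, (∑ i ∈ s, Y i ω) ^ 2 ∂P = s.card * m2
  eS4 : ∫ ω, (∑ i ∈ s, Y i ω) ^ 4 ∂P
      = s.card * m4 + 3 * s.card * (s.card - 1) * m2 ^ 2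
  eU : ∫ ω, ∑ i ∈ s, Y i ω ^ 2 ∂P = s.card * m2
  eU2 : ∫ ω, (∑ i ∈ s, Y i ω ^ 2) ^ 2 ∂P
      = s.card * m4 + s.card * (s.card - 1) * m2 ^ 2
  eUS : ∫ ω, (∑ i ∈ s, Y i ω ^ 2) * (∑ i ∈ s, Y i ω) ∂P = s.card * m3
  eUS2 : ∫ ω, (∑ i ∈ s, Y i ω ^ 2) * (∑ i ∈ s, Y i ω) ^ 2 ∂P
      = s.card * m4 + s.card * (s.card - 1) * m2 ^ 2

lemma moments_aux {Ω : Type*} [MeasurableSpace Ω] (P : Measure Ω) [IsProbabilityMeasure P]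
    {n : ℕ} (Y : Fin n → Ω → ℝ) (hYmeas : ∀ i, Measurable (Y i))
    (hYindep : iIndepFun Y P)
    (m2 m3 m4 : ℝ)
    (hI1 : ∀ i, Integrable (fun ω => Y i ω) P)
    (hI2 : ∀ i, Integrable (fun ω => Y i ω ^ 2) P)
    (hI3 : ∀ i, Integrable (fun ω => Y i ω ^ 3) P)
    (hI4 : ∀ i, Integrable (fun ω => Y i ω ^ 4) P)
    (h1 : ∀ i, ∫ ω, Y i ω ∂P = 0)
    (h2 : ∀ i, ∫ ω, Y i ω ^ 2 ∂P = m2)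
    (h3 : ∀ i, ∫ ω, Y i ω ^ 3 ∂P = m3)
    (h4 : ∀ i, ∫ ω, Y i ω ^ 4 ∂P = m4)
    (s : Finset (Fin n)) : MomProp P Y m2 m3 m4 s := by
  classical
  induction s using Finset.induction_on with
  | empty => refine ⟨?_, ?_, ?_, ?_, ?_, ?_, ?_, ?_, ?_, ?_, ?_, ?_, ?_, ?_, ?_⟩ <;> simp
  | @insert a s ha ih =>
    obtain ⟨iS, iS2, iS3, iS4, iU, iU2, iUS, iUS2, eS, eS2, eS4, eU, eU2, eUS, eUS2⟩ := ih
    -- independence of any function of (U,S) from any function of Y a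
    have key : ∀ (g : ℝ × ℝ → ℝ), Measurable g → ∀ (h : ℝ → ℝ), Measurable h →
        IndepFun (fun ω => g (∑ i ∈ s, Y i ω ^ 2, ∑ i ∈ s, Y i ω))
          (fun ω => h (Y a ω)) P := by
      intro g hg h hh
      have hd : Disjoint s {a} := by
        simp [Finset.disjoint_singleton_right, ha]
      have h0 := hYindep.indepFun_finset s {a} hd hYmeas
      have hF : Measurable (fun v : (↥s → ℝ) =>
          g (∑ i ∈ s.attach, v i ^ 2, ∑ i ∈ s.attach, v i)) := by
        apply hg.comp
        exact (Finset.measurable_sum _ fun i _ => (measurable_pi_apply i).pow_const 2).prodMk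
          (Finset.measurable_sum _ fun i _ => measurable_pi_apply i)
      have hG : Measurable (fun v : (↥({a} : Finset (Fin n)) → ℝ) =>
          h (v ⟨a, Finset.mem_singleton_self a⟩)) := hh.comp (measurable_pi_apply _)
      have h1' := h0.comp hF hG
      have e1 : ((fun v : (↥s → ℝ) =>
          g (∑ i ∈ s.attach, v i ^ 2, ∑ i ∈ s.attach, v i)) ∘ (fun ω (i : ↥s) => Y i ω))
          = fun ω => g (∑ i ∈ s, Y i ω ^ 2, ∑ i ∈ s, Y i ω) := by
        funext ω
        simp only [Function.comp_apply]
        rw [Finset.sum_attach s (fun j => Y j ω ^ 2), Finset.sum_attach s (fun j => Y j ω)]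
      have e2 : ((fun v : (↥({a} : Finset (Fin n)) → ℝ) =>
          h (v ⟨a, Finset.mem_singleton_self a⟩)) ∘ (fun ω (i : ↥({a} : Finset (Fin n))) => Y i ω))
          = fun ω => h (Y a ω) := by
        funext ω; simp [Function.comp_apply]
      rwa [e1, e2] at h1'
    have mul2 : ∀ (F G : Ω → ℝ), IndepFun F G P → Integrable F P → Integrable G P →
        Integrable (fun ω => F ω * G ω) P ∧
          ∫ ω, F ω * G ω ∂P = (∫ ω, F ω ∂P) * ∫ ω, G ω ∂P :=
      fun F G hFG hF hG => ⟨hFG.integrable_mul hF hG, hFG.integral_mul_eq_mul_integral hF.1 hG.1⟩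
    -- individual products
    obtain ⟨jSA, eSA⟩ := mul2 (fun ω => ∑ i ∈ s, Y i ω) (fun ω => Y a ω)
      (key (fun p => p.2) (by fun_prop) (fun x => x) (by fun_prop)) iS (hI1 a)
    obtain ⟨jSA2, eSA2⟩ := mul2 (fun ω => ∑ i ∈ s, Y i ω) (fun ω => Y a ω ^ 2)
      (key (fun p => p.2) (by fun_prop) (fun x => x ^ 2) (by fun_prop)) iS (hI2 a)
    obtain ⟨jSA3, eSA3⟩ := mul2 (fun ω => ∑ i ∈ s, Y i ω) (fun ω => Y a ω ^ 3)
      (key (fun p => p.2) (by fun_prop) (fun x => x ^ 3) (by fun_prop)) iS (hI3 a)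
    obtain ⟨jS2A, eS2A⟩ := mul2 (fun ω => (∑ i ∈ s, Y i ω) ^ 2) (fun ω => Y a ω)
      (key (fun p => p.2 ^ 2) (by fun_prop) (fun x => x) (by fun_prop)) iS2 (hI1 a)
    obtain ⟨jS2A2, eS2A2⟩ := mul2 (fun ω => (∑ i ∈ s, Y i ω) ^ 2) (fun ω => Y a ω ^ 2)
      (key (fun p => p.2 ^ 2) (by fun_prop) (fun x => x ^ 2) (by fun_prop)) iS2 (hI2 a)
    obtain ⟨jS3A, eS3A⟩ := mul2 (fun ω => (∑ i ∈ s, Y i ω) ^ 3) (fun ω => Y a ω)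
      (key (fun p => p.2 ^ 3) (by fun_prop) (fun x => x) (by fun_prop)) iS3 (hI1 a)
    obtain ⟨jUA, eUA⟩ := mul2 (fun ω => ∑ i ∈ s, Y i ω ^ 2) (fun ω => Y a ω)
      (key (fun p => p.1) (by fun_prop) (fun x => x) (by fun_prop)) iU (hI1 a)
    obtain ⟨jUA2, eUA2⟩ := mul2 (fun ω => ∑ i ∈ s, Y i ω ^ 2) (fun ω => Y a ω ^ 2)
      (key (fun p => p.1) (by fun_prop) (fun x => x ^ 2) (by fun_prop)) iU (hI2 a)
    obtain ⟨jUSA, eUSA⟩ := mul2 (fun ω => (∑ i ∈ s, Y i ω ^ 2) * (∑ i ∈ s, Y i ω))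
      (fun ω => Y a ω)
      (key (fun p => p.1 * p.2) (by fun_prop) (fun x => x) (by fun_prop)) iUS (hI1 a)
    -- pointwise expansions
    have d1 : ∀ ω, ∑ i ∈ insert a s, Y i ω = Y a ω + ∑ i ∈ s, Y i ω :=
      fun ω => Finset.sum_insert ha
    have d2 : ∀ ω, ∑ i ∈ insert a s, Y i ω ^ 2 = Y a ω ^ 2 + ∑ i ∈ s, Y i ω ^ 2 :=
      fun ω => Finset.sum_insert ha
    have e2' : ∀ ω, (Y a ω + ∑ i ∈ s, Y i ω) ^ 2
        = (∑ i ∈ s, Y i ω) ^ 2 + (2 * ((∑ i ∈ s, Y i ω) * Y a ω) + Y a ω ^ 2) :=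
      fun ω => by ring
    have e3' : ∀ ω, (Y a ω + ∑ i ∈ s, Y i ω) ^ 3
        = (∑ i ∈ s, Y i ω) ^ 3 + (3 * ((∑ i ∈ s, Y i ω) ^ 2 * Y a ω)
          + (3 * ((∑ i ∈ s, Y i ω) * Y a ω ^ 2) + Y a ω ^ 3)) :=
      fun ω => by ring
    have e4' : ∀ ω, (Y a ω + ∑ i ∈ s, Y i ω) ^ 4
        = (∑ i ∈ s, Y i ω) ^ 4 + (4 * ((∑ i ∈ s, Y i ω) ^ 3 * Y a ω)
          + (6 * ((∑ i ∈ s, Y i ω) ^ 2 * Y a ω ^ 2)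
          + (4 * ((∑ i ∈ s, Y i ω) * Y a ω ^ 3) + Y a ω ^ 4))) :=
      fun ω => by ring
    have eu2' : ∀ ω, (Y a ω ^ 2 + ∑ i ∈ s, Y i ω ^ 2) ^ 2
        = (∑ i ∈ s, Y i ω ^ 2) ^ 2 + (2 * ((∑ i ∈ s, Y i ω ^ 2) * Y a ω ^ 2) + Y a ω ^ 4) :=
      fun ω => by ring
    have eus' : ∀ ω, (Y a ω ^ 2 + ∑ i ∈ s, Y i ω ^ 2) * (Y a ω + ∑ i ∈ s, Y i ω)
        = (∑ i ∈ s, Y i ω ^ 2) * (∑ i ∈ s, Y i ω)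
          + ((∑ i ∈ s, Y i ω ^ 2) * Y a ω + ((∑ i ∈ s, Y i ω) * Y a ω ^ 2 + Y a ω ^ 3)) :=
      fun ω => by ring
    have eus2' : ∀ ω, (Y a ω ^ 2 + ∑ i ∈ s, Y i ω ^ 2) * (Y a ω + ∑ i ∈ s, Y i ω) ^ 2
        = (∑ i ∈ s, Y i ω ^ 2) * (∑ i ∈ s, Y i ω) ^ 2
          + (2 * ((∑ i ∈ s, Y i ω ^ 2) * (∑ i ∈ s, Y i ω) * Y a ω)
          + ((∑ i ∈ s, Y i ω ^ 2) * Y a ω ^ 2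
          + ((∑ i ∈ s, Y i ω) ^ 2 * Y a ω ^ 2
          + (2 * ((∑ i ∈ s, Y i ω) * Y a ω ^ 3) + Y a ω ^ 4)))) :=
      fun ω => by ring
    -- grouped integrabilities (with plain lambda types, for rewriting)
    have JS2b : Integrable (fun ω => 2 * ((∑ i ∈ s, Y i ω) * Y a ω) + Y a ω ^ 2) P :=
      (jSA.const_mul 2).add (hI2 a)
    have JS3b : Integrable (fun ω => 3 * ((∑ i ∈ s, Y i ω) * Y a ω ^ 2) + Y a ω ^ 3) P :=
      (jSA2.const_mul 3).add (hI3 a)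
    have JS3a : Integrable (fun ω => 3 * ((∑ i ∈ s, Y i ω) ^ 2 * Y a ω)
        + (3 * ((∑ i ∈ s, Y i ω) * Y a ω ^ 2) + Y a ω ^ 3)) P :=
      (jS2A.const_mul 3).add JS3b
    have JS4c : Integrable (fun ω => 4 * ((∑ i ∈ s, Y i ω) * Y a ω ^ 3) + Y a ω ^ 4) P :=
      (jSA3.const_mul 4).add (hI4 a)
    have JS4b : Integrable (fun ω => 6 * ((∑ i ∈ s, Y i ω) ^ 2 * Y a ω ^ 2)
        + (4 * ((∑ i ∈ s, Y i ω) * Y a ω ^ 3) + Y a ω ^ 4)) P :=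
      (jS2A2.const_mul 6).add JS4c
    have JS4a : Integrable (fun ω => 4 * ((∑ i ∈ s, Y i ω) ^ 3 * Y a ω)
        + (6 * ((∑ i ∈ s, Y i ω) ^ 2 * Y a ω ^ 2)
        + (4 * ((∑ i ∈ s, Y i ω) * Y a ω ^ 3) + Y a ω ^ 4))) P :=
      (jS3A.const_mul 4).add JS4b
    have JU2b : Integrable (fun ω => 2 * ((∑ i ∈ s, Y i ω ^ 2) * Y a ω ^ 2) + Y a ω ^ 4) P :=
      (jUA2.const_mul 2).add (hI4 a)
    have JUSc : Integrable (fun ω => (∑ i ∈ s, Y i ω) * Y a ω ^ 2 + Y a ω ^ 3) P :=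
      jSA2.add (hI3 a)
    have JUSb : Integrable (fun ω => (∑ i ∈ s, Y i ω ^ 2) * Y a ω
        + ((∑ i ∈ s, Y i ω) * Y a ω ^ 2 + Y a ω ^ 3)) P :=
      jUA.add JUSc
    have JUS2e : Integrable (fun ω => 2 * ((∑ i ∈ s, Y i ω) * Y a ω ^ 3) + Y a ω ^ 4) P :=
      (jSA3.const_mul 2).add (hI4 a)
    have JUS2d : Integrable (fun ω => (∑ i ∈ s, Y i ω) ^ 2 * Y a ω ^ 2
        + (2 * ((∑ i ∈ s, Y i ω) * Y a ω ^ 3) + Y a ω ^ 4)) P :=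
      jS2A2.add JUS2e
    have JUS2c : Integrable (fun ω => (∑ i ∈ s, Y i ω ^ 2) * Y a ω ^ 2
        + ((∑ i ∈ s, Y i ω) ^ 2 * Y a ω ^ 2
        + (2 * ((∑ i ∈ s, Y i ω) * Y a ω ^ 3) + Y a ω ^ 4))) P :=
      jUA2.add JUS2d
    have JUS2b : Integrable (fun ω => 2 * (((∑ i ∈ s, Y i ω ^ 2) * ∑ i ∈ s, Y i ω) * Y a ω)
        + ((∑ i ∈ s, Y i ω ^ 2) * Y a ω ^ 2
        + ((∑ i ∈ s, Y i ω) ^ 2 * Y a ω ^ 2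
        + (2 * ((∑ i ∈ s, Y i ω) * Y a ω ^ 3) + Y a ω ^ 4)))) P :=
      (jUSA.const_mul 2).add JUS2c
    -- integrabilities of the new sums
    have IS : Integrable (fun ω => ∑ i ∈ insert a s, Y i ω) P := by
      simp only [d1]; exact (hI1 a).add iS
    have IS2 : Integrable (fun ω => (∑ i ∈ insert a s, Y i ω) ^ 2) P := by
      simp only [d1, e2']; exact iS2.add JS2b
    have IS3 : Integrable (fun ω => (∑ i ∈ insert a s, Y i ω) ^ 3) P := by
      simp only [d1, e3']; exact iS3.add JS3a
    have IS4 : Integrable (fun ω => (∑ i ∈ insert a s, Y i ω) ^ 4) P := by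
      simp only [d1, e4']; exact iS4.add JS4a
    have IU : Integrable (fun ω => ∑ i ∈ insert a s, Y i ω ^ 2) P := by
      simp only [d2]; exact (hI2 a).add iU
    have IU2 : Integrable (fun ω => (∑ i ∈ insert a s, Y i ω ^ 2) ^ 2) P := by
      simp only [d2, eu2']; exact iU2.add JU2b
    have IUS : Integrable (fun ω => (∑ i ∈ insert a s, Y i ω ^ 2) * (∑ i ∈ insert a s, Y i ω)) P := by
      simp only [d1, d2, eus']; exact iUS.add JUSb
    have IUS2 : Integrable
        (fun ω => (∑ i ∈ insert a s, Y i ω ^ 2) * (∑ i ∈ insert a s, Y i ω) ^ 2) P := by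
      simp only [d1, d2, eus2']; exact iUS2.add JUS2b
    have hcard : ((insert a s).card : ℝ) = (s.card : ℝ) + 1 := by
      rw [Finset.card_insert_of_notMem ha]; push_cast; ring
    refine ⟨IS, IS2, IS3, IS4, IU, IU2, IUS, IUS2, ?_, ?_, ?_, ?_, ?_, ?_, ?_⟩
    · simp only [d1]
      rw [integral_add (hI1 a) iS, h1 a, eS]; norm_num
    · simp only [d1, e2']
      rw [integral_add iS2 JS2b, integral_add (jSA.const_mul 2) (hI2 a),
        integral_const_mul, eSA]
      rw [eS2, eS, h2 a, hcard]; ring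
    · simp only [d1, e4']
      rw [integral_add iS4 JS4a, integral_add (jS3A.const_mul 4) JS4b,
        integral_add (jS2A2.const_mul 6) JS4c,
        integral_add (jSA3.const_mul 4) (hI4 a),
        integral_const_mul, integral_const_mul, integral_const_mul,
        eS3A, eS2A2, eSA3]
      rw [eS4, eS2, eS, h1 a, h2 a, h3 a, h4 a, hcard]; ring
    · simp only [d2]
      rw [integral_add (hI2 a) iU, h2 a, eU, hcard]; ring
    · simp only [d2, eu2']
      rw [integral_add iU2 JU2b, integral_add (jUA2.const_mul 2) (hI4 a),
        integral_const_mul, eUA2]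
      rw [eU2, eU, h2 a, h4 a, hcard]; ring
    · simp only [d1, d2, eus']
      rw [integral_add iUS JUSb, integral_add jUA JUSc,
        integral_add jSA2 (hI3 a), eUA, eSA2]
      rw [eUS, eU, eS, h1 a, h2 a, h3 a, hcard]; ring
    · simp only [d1, d2, eus2']
      rw [integral_add iUS2 JUS2b, integral_add (jUSA.const_mul 2) JUS2c,
        integral_add jUA2 JUS2d, integral_add jS2A2 JUS2e,
        integral_add (jSA3.const_mul 2) (hI4 a),
        integral_const_mul, integral_const_mul,
        eUSA, eUA2, eS2A2, eSA3]
      rw [eUS2, eU, eS2, eS, h1 a, h2 a, h3 a, h4 a, hcard]; ring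


lemma sum_sq_dev (n : ℕ) (hn : 0 < n) (v : Fin n → ℝ) (μ : ℝ) :
    ∑ i, (v i - (1 / n : ℝ) * ∑ j, v j) ^ 2
      = (∑ i, (v i - μ) ^ 2) - (∑ i, (v i - μ)) ^ 2 / n := by
  have hn' : (n : ℝ) ≠ 0 := Nat.cast_ne_zero.mpr hn.ne'
  have hs : ∑ i, (v i - μ) = (n : ℝ) * ((1 / n : ℝ) * (∑ j, v j) - μ) := by
    rw [Finset.sum_sub_distrib, Finset.sum_const, Finset.card_univ, Fintype.card_fin,
      nsmul_eq_mul]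
    field_simp
  have key : ∀ x : Fin n, (v x - (1 / n : ℝ) * ∑ j, v j) ^ 2
      = (v x - μ) ^ 2 - (2 * ((1 / n : ℝ) * (∑ j, v j) - μ)) * (v x - μ)
        + ((1 / n : ℝ) * (∑ j, v j) - μ) ^ 2 := fun x => by ring
  rw [Finset.sum_congr rfl fun x _ => key x]
  rw [Finset.sum_add_distrib, Finset.sum_sub_distrib, ← Finset.mul_sum, hs,
    Finset.sum_const, Finset.card_univ, Fintype.card_fin, nsmul_eq_mul]
  field_simp
  ring

/-- **MSE-best scalar multiple of the sample variance.**
Let `n ≥ 2` and let `X₁, …, X_n` be i.i.d. with mean `μ`, variance `σ² > 0`,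
finite fourth central moment `μ₄`, excess kurtosis `κ = μ₄/σ⁴ - 3`, and sample
variance `s² = (1/(n-1)) ∑ (X i - X̄)²`.  Among all estimators `c · s²`, the
mean squared error `E[(c s² - σ²)²]` is minimized at
`c* = (κ/n + (n+1)/(n-1))⁻¹`. -/
theorem mse_best_biased_variance_estimator
    {Ω : Type*} [MeasurableSpace Ω] (P : Measure Ω) [IsProbabilityMeasure P]
    (n : ℕ) (hn : 2 ≤ n)
    (X : Fin n → Ω → ℝ) (hmeas : ∀ i, Measurable (X i))
    (hindep : iIndepFun X P)
    (hident : ∀ i, IdentDistrib (X i) (X ⟨0, by omega⟩) P P)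
    (μ σ2 μ4 κ cstar : ℝ)
    (hμ : μ = ∫ ω, X ⟨0, by omega⟩ ω ∂P)
    (hσ2 : σ2 = ∫ ω, (X ⟨0, by omega⟩ ω - μ) ^ 2 ∂P) (hσ2pos : 0 < σ2)
    (hμ4 : μ4 = ∫ ω, (X ⟨0, by omega⟩ ω - μ) ^ 4 ∂P)
    (hint1 : Integrable (X ⟨0, by omega⟩) P)
    (hint2 : Integrable (fun ω => (X ⟨0, by omega⟩ ω - μ) ^ 2) P)
    (hint4 : Integrable (fun ω => (X ⟨0, by omega⟩ ω - μ) ^ 4) P)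
    (hκ : κ = μ4 / σ2 ^ 2 - 3)
    (hcstar : cstar = (κ / n + ((n : ℝ) + 1) / ((n : ℝ) - 1))⁻¹)
    (Xbar s2 : Ω → ℝ)
    (hXbar : ∀ ω, Xbar ω = (1 / n : ℝ) * ∑ i, X i ω)
    (hs2 : ∀ ω, s2 ω = (1 / ((n : ℝ) - 1)) * ∑ i, (X i ω - Xbar ω) ^ 2) :
    ∀ c : ℝ,
      ∫ ω, (cstar * s2 ω - σ2) ^ 2 ∂P ≤ ∫ ω, (c * s2 ω - σ2) ^ 2 ∂P := by
  intro c
  have hn2R : (2 : ℝ) ≤ (n : ℝ) := by exact_mod_cast hn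
  have hn0 : (n : ℝ) ≠ 0 := ne_of_gt (by linarith)
  have hn1 : ((n : ℝ) - 1) ≠ 0 := ne_of_gt (by linarith)
  have hσne : σ2 ≠ 0 := ne_of_gt hσ2pos
  set i0 : Fin n := ⟨0, by omega⟩ with hi0
  have hμ' : μ = ∫ ω, X i0 ω ∂P := hμ
  have hσ2' : σ2 = ∫ ω, (X i0 ω - μ) ^ 2 ∂P := hσ2
  have hμ4' : μ4 = ∫ ω, (X i0 ω - μ) ^ 4 ∂P := hμ4
  have hint1' : Integrable (fun ω => X i0 ω) P := hint1
  have hint2' : Integrable (fun ω => (X i0 ω - μ) ^ 2) P := hint2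
  have hint4' : Integrable (fun ω => (X i0 ω - μ) ^ 4) P := hint4
  -- centered variables
  have hYmeas : ∀ i, Measurable (fun ω => X i ω - μ) := fun i => (hmeas i).sub measurable_const
  have hYindep : iIndepFun (fun i ω => X i ω - μ) P :=
    hindep.comp (fun _ x => x - μ) (fun _ => measurable_id.sub measurable_const)
  have hYid1 : ∀ i, IdentDistrib (fun ω => X i ω - μ) (fun ω => X i0 ω - μ) P P :=
    fun i => (hident i).comp (measurable_id.sub measurable_const)
  have hYid : ∀ i (k : ℕ),
      IdentDistrib (fun ω => (X i ω - μ) ^ k) (fun ω => (X i0 ω - μ) ^ k) P P :=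
    fun i k => (hYid1 i).comp (measurable_id.pow_const k)
  have hI1' : ∀ i, Integrable (fun ω => X i ω - μ) P :=
    fun i => (hYid1 i).integrable_iff.mpr (hint1'.sub (integrable_const μ))
  have hI2' : ∀ i, Integrable (fun ω => (X i ω - μ) ^ 2) P :=
    fun i => (hYid i 2).integrable_iff.mpr hint2'
  have hI4' : ∀ i, Integrable (fun ω => (X i ω - μ) ^ 4) P :=
    fun i => (hYid i 4).integrable_iff.mpr hint4'
  have hI3base : Integrable (fun ω => (X i0 ω - μ) ^ 3) P := by
    have hgint : Integrable (fun ω => (X i0 ω - μ) ^ 2 + (X i0 ω - μ) ^ 4) P :=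
      hint2'.add hint4'
    refine hgint.mono'
      ((((hmeas i0).sub measurable_const).pow_const 3).aestronglyMeasurable) ?_
    filter_upwards with ω
    rw [Real.norm_eq_abs, abs_pow]
    have hcube : (X i0 ω - μ) ^ 2 * |X i0 ω - μ| = |X i0 ω - μ| ^ 3 := by
      rw [← sq_abs]; ring
    nlinarith [sq_nonneg ((X i0 ω - μ) ^ 2 - |X i0 ω - μ|), hcube, sq_abs (X i0 ω - μ),
      abs_nonneg (X i0 ω - μ), pow_nonneg (abs_nonneg (X i0 ω - μ)) 3]
  have hI3' : ∀ i, Integrable (fun ω => (X i ω - μ) ^ 3) P :=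
    fun i => (hYid i 3).integrable_iff.mpr hI3base
  have h1' : ∀ i, ∫ ω, X i ω - μ ∂P = 0 := by
    intro i
    have hbase : ∫ ω, X i0 ω - μ ∂P = 0 := by
      have : ∫ ω, (X i0 ω - μ) ∂P = (∫ ω, X i0 ω ∂P) - μ := by
        rw [integral_sub hint1' (integrable_const μ), integral_const]
        simp
      rw [this, ← hμ', sub_self]
    exact ((hYid1 i).integral_eq).trans hbase
  have h2' : ∀ i, ∫ ω, (X i ω - μ) ^ 2 ∂P = σ2 :=
    fun i => ((hYid i 2).integral_eq).trans hσ2'.symm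
  have h4' : ∀ i, ∫ ω, (X i ω - μ) ^ 4 ∂P = μ4 :=
    fun i => ((hYid i 4).integral_eq).trans hμ4'.symm
  set m3 : ℝ := ∫ ω, (X i0 ω - μ) ^ 3 ∂P with hm3
  have h3' : ∀ i, ∫ ω, (X i ω - μ) ^ 3 ∂P = m3 := fun i => (hYid i 3).integral_eq
  obtain ⟨iS, iS2, iS3, iS4, iU, iU2, iUS, iUS2, eS, eS2, eS4, eU, eU2, eUS, eUS2⟩ :=
    moments_aux P (fun i ω => X i ω - μ) hYmeas hYindep σ2 m3 μ4
      hI1' hI2' hI3' hI4' h1' h2' h3' h4' Finset.univ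
  have hcard : (((Finset.univ : Finset (Fin n))).card : ℝ) = (n : ℝ) := by simp
  rw [hcard] at eS2 eS4 eU eU2 eUS2
  -- rewrite s2
  have hs2' : s2 = fun ω => (1 / ((n : ℝ) - 1)) *
      ((∑ i, (X i ω - μ) ^ 2) - (∑ i, (X i ω - μ)) ^ 2 / n) := by
    funext ω
    rw [hs2 ω]
    congr 1
    calc ∑ i, (X i ω - Xbar ω) ^ 2
        = ∑ i, (X i ω - (1 / n : ℝ) * ∑ j, X j ω) ^ 2 := by rw [hXbar ω]
      _ = (∑ i, (X i ω - μ) ^ 2) - (∑ i, (X i ω - μ)) ^ 2 / n :=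
        sum_sq_dev n (by omega) (fun i => X i ω) μ
  have e_sq : (fun ω => ((1 / ((n : ℝ) - 1)) *
        ((∑ i, (X i ω - μ) ^ 2) - (∑ i, (X i ω - μ)) ^ 2 / n)) ^ 2)
      = fun ω => (1 / ((n : ℝ) - 1)) ^ 2 *
        ((∑ i, (X i ω - μ) ^ 2) ^ 2
          - (2 / n) * ((∑ i, (X i ω - μ) ^ 2) * (∑ i, (X i ω - μ)) ^ 2)
          + (1 / (n : ℝ) ^ 2) * (∑ i, (X i ω - μ)) ^ 4) := by
    funext ω; ring
  have K2 : Integrable (fun ω => (2 / (n : ℝ)) *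
      ((∑ i, (X i ω - μ) ^ 2) * (∑ i, (X i ω - μ)) ^ 2)) P := iUS2.const_mul _
  have K3 : Integrable (fun ω => (1 / (n : ℝ) ^ 2) * (∑ i, (X i ω - μ)) ^ 4) P :=
    iS4.const_mul _
  have K4 : Integrable (fun ω => (∑ i, (X i ω - μ) ^ 2) ^ 2
      - (2 / (n : ℝ)) * ((∑ i, (X i ω - μ) ^ 2) * (∑ i, (X i ω - μ)) ^ 2)) P := iU2.sub K2
  have K1 : Integrable (fun ω => (∑ i, (X i ω - μ) ^ 2) - (∑ i, (X i ω - μ)) ^ 2 / n) P :=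
    iU.sub (iS2.div_const _)
  have Is2 : Integrable s2 P := by
    rw [hs2']; exact K1.const_mul _
  have Is2sq : Integrable (fun ω => s2 ω ^ 2) P := by
    simp only [hs2', e_sq]
    exact (K4.add K3).const_mul _
  have hA : ∫ ω, s2 ω ∂P = σ2 := by
    simp only [hs2']
    rw [integral_const_mul, integral_sub iU (iS2.div_const _), integral_div, eU, eS2]
    field_simp
  have hB : ∫ ω, s2 ω ^ 2 ∂P
      = σ2 ^ 2 * (κ / n + ((n : ℝ) + 1) / ((n : ℝ) - 1)) := by
    simp only [hs2', e_sq]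
    rw [integral_const_mul, integral_add K4 K3, integral_sub iU2 K2,
      integral_const_mul, integral_const_mul, eU2, eUS2, eS4, hκ]
    field_simp
    ring
  have hm4 : 0 ≤ μ4 := by
    rw [hμ4']; exact integral_nonneg fun ω => by positivity
  have hD : 0 < κ / n + ((n : ℝ) + 1) / ((n : ℝ) - 1) := by
    have hrw : κ / n + ((n : ℝ) + 1) / ((n : ℝ) - 1)
        = (μ4 / σ2 ^ 2 * ((n : ℝ) - 1) + (((n : ℝ) - 1) ^ 2 + 2)) / ((n : ℝ) * ((n : ℝ) - 1)) := by
      rw [hκ]; field_simp; ring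
    rw [hrw]
    apply div_pos
    · have h0 : 0 ≤ μ4 / σ2 ^ 2 * ((n : ℝ) - 1) :=
        mul_nonneg (div_nonneg hm4 (sq_nonneg σ2)) (by linarith)
      linarith [sq_nonneg ((n : ℝ) - 1)]
    · have : (0:ℝ) < (n : ℝ) := by linarith
      have : (0:ℝ) < (n : ℝ) - 1 := by linarith
      positivity
  have hDne : (κ / n + ((n : ℝ) + 1) / ((n : ℝ) - 1)) ≠ 0 := ne_of_gt hD
  have hBpos : 0 < σ2 ^ 2 * (κ / n + ((n : ℝ) + 1) / ((n : ℝ) - 1)) :=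
    mul_pos (pow_pos hσ2pos 2) hD
  have hc : cstar * (σ2 ^ 2 * (κ / n + ((n : ℝ) + 1) / ((n : ℝ) - 1))) = σ2 ^ 2 := by
    rw [hcstar, mul_left_comm, inv_mul_cancel₀ hDne, mul_one]
  have expand : ∀ d : ℝ, ∫ ω, (d * s2 ω - σ2) ^ 2 ∂P
      = d ^ 2 * (σ2 ^ 2 * (κ / n + ((n : ℝ) + 1) / ((n : ℝ) - 1)))
        - 2 * d * σ2 ^ 2 + σ2 ^ 2 := by
    intro d
    have e : (fun ω => (d * s2 ω - σ2) ^ 2)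
        = fun ω => d ^ 2 * s2 ω ^ 2 - (2 * d * σ2) * s2 ω + σ2 ^ 2 := by
      funext ω; ring
    have L1 : Integrable (fun ω => d ^ 2 * s2 ω ^ 2) P := Is2sq.const_mul _
    have L2 : Integrable (fun ω => (2 * d * σ2) * s2 ω) P := Is2.const_mul _
    have L3 : Integrable (fun ω => d ^ 2 * s2 ω ^ 2 - (2 * d * σ2) * s2 ω) P := L1.sub L2
    rw [e, integral_add L3 (integrable_const _), integral_sub L1 L2, integral_const_mul,
      integral_const_mul, integral_const, hA, hB]
    simp [measure_univ]
    ring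
  rw [expand cstar, expand c]
  have hd : c ^ 2 * (σ2 ^ 2 * (κ / n + ((n : ℝ) + 1) / ((n : ℝ) - 1))) - 2 * c * σ2 ^ 2 + σ2 ^ 2
      - (cstar ^ 2 * (σ2 ^ 2 * (κ / n + ((n : ℝ) + 1) / ((n : ℝ) - 1)))
        - 2 * cstar * σ2 ^ 2 + σ2 ^ 2)
      = (σ2 ^ 2 * (κ / n + ((n : ℝ) + 1) / ((n : ℝ) - 1))) * (c - cstar) ^ 2
        + 2 * (c - cstar) * (cstar * (σ2 ^ 2 * (κ / n + ((n : ℝ) + 1) / ((n : ℝ) - 1))) - σ2 ^ 2) := by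
    ring
  rw [hc, sub_self, mul_zero, add_zero] at hd
  linarith [mul_nonneg hBpos.le (sq_nonneg (c - cstar)), hd]
end
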